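/- For any f, g ∈ Homeo_Z^+(R), the translation number of the commutator satisfies -1 ≤ rot([f,g]) ≤ 1, where [f,g] = g^{-1} f^{-1} g f. -/
import Mathlib

open CircleDeg1Lift

lemma units_surjective (u : CircleDeg1Liftˣ) :
    Function.Surjective ((u : CircleDeg1Lift) : ℝ → ℝ) := fun y =>
  ⟨(u⁻¹ : CircleDeg1Liftˣ) y, CircleDeg1Lift.units_apply_inv_apply u y⟩

lemma units_continuous (u : CircleDeg1Liftˣ) :
    Continuous ((u : CircleDeg1Lift) : ℝ → ℝ) :=
  (CircleDeg1Lift.continuous_iff_surjective _).2 (units_surjective u)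

lemma units_lower_bound (u : CircleDeg1Liftˣ) (y : ℝ) :
    y + CircleDeg1Lift.translationNumber (u : CircleDeg1Lift) - 1
      < (u : CircleDeg1Lift) y := by
  have h := (u⁻¹ : CircleDeg1Liftˣ).val.map_lt_add_translationNumber_add_one
    ((u : CircleDeg1Lift) y)
  rw [CircleDeg1Lift.units_inv_apply_apply u, translationNumber_units_inv] at h
  linarith

lemma translationNumber_mul_comm (f g : CircleDeg1Liftˣ) :
    CircleDeg1Lift.translationNumber ((f * g : CircleDeg1Liftˣ) : CircleDeg1Lift)
      = CircleDeg1Lift.translationNumber ((g * f : CircleDeg1Liftˣ) : CircleDeg1Lift) := by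
  have := translationNumber_conj_eq f ((g : CircleDeg1Lift) * (f : CircleDeg1Lift))
  simpa [mul_assoc, units_apply_inv_apply, Units.val_mul] using this

/-- Milnor–Wood for a commutator: `-1 ≤ rot([f,g]) ≤ 1`. -/
theorem rot_commutator_bounds (f g : CircleDeg1Liftˣ) :
    |CircleDeg1Lift.translationNumber ((g⁻¹ * f⁻¹ * g * f : CircleDeg1Liftˣ) : CircleDeg1Lift)| ≤ 1 := by
  set c : CircleDeg1Lift := ((g⁻¹ * f⁻¹ * g * f : CircleDeg1Liftˣ) : CircleDeg1Lift) with hc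
  set T : ℝ := CircleDeg1Lift.translationNumber ((g * f : CircleDeg1Liftˣ) : CircleDeg1Lift)
    with hT
  -- choose a point where `g * f` translates exactly by its translation number
  obtain ⟨x, hx⟩ := ((g * f : CircleDeg1Liftˣ) : CircleDeg1Lift).exists_eq_add_translationNumber
    (units_continuous (g * f))
  -- translation number of (f*g)⁻¹ is -T
  have hfgT : CircleDeg1Lift.translationNumber (((f * g)⁻¹ : CircleDeg1Liftˣ) : CircleDeg1Lift)
      = -T := by
    rw [translationNumber_units_inv, translationNumber_mul_comm]
  -- c x = (f*g)⁻¹ (x + T)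
  have hcx : c x = (((f * g)⁻¹ : CircleDeg1Liftˣ) : CircleDeg1Lift) (x + T) := by
    have h1 : ((g * f : CircleDeg1Liftˣ) : CircleDeg1Lift) x = x + T := hx
    have : c x = (((f * g)⁻¹ : CircleDeg1Liftˣ) : CircleDeg1Lift)
        (((g * f : CircleDeg1Liftˣ) : CircleDeg1Lift) x) := by
      simp only [hc, mul_inv_rev, Units.val_mul, CircleDeg1Lift.mul_apply]
    rw [this, h1]
  have hub : c x < x + 1 := by
    have h := (((f * g)⁻¹ : CircleDeg1Liftˣ) : CircleDeg1Lift).map_lt_add_translationNumber_add_one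
      (x + T)
    rw [hfgT] at h
    rw [hcx]; linarith
  have hlb : x - 1 < c x := by
    have h := units_lower_bound (f * g)⁻¹ (x + T)
    rw [hfgT] at h
    rw [hcx]; linarith
  rw [abs_le]
  constructor
  · have h1 : ((-1 : ℤ) : ℝ) ≤ ⌊c x - x⌋ := by
      have : (-1 : ℝ) ≤ c x - x := by linarith
      exact_mod_cast Int.le_floor.2 (by exact_mod_cast this)
    have h2 := c.floor_sub_le_translationNumber x
    push_cast at h1
    linarith
  · have h1 : (⌈c x - x⌉ : ℝ) ≤ ((1 : ℤ) : ℝ) := by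
      have : c x - x ≤ (1 : ℝ) := by linarith
      exact_mod_cast Int.ceil_le.2 (by exact_mod_cast this)
    have h2 := c.translationNumber_le_ceil_sub x
    push_cast at h1
    linarith
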